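/- Let 1/2 < δ < 1 and let f : ℝ^n → ℂ satisfy |f(x)| ≤ |x|^{−α} (1+|x|²)^{−β/2} with 2α + 2β > n − 2δ and 2α < n. Then for every g ∈ L²(ℝ^n) supported in a fixed compact set D, the convolution f * g satisfies ‖f * g‖_{L^{2,−δ}(ℝ^n)} ≤ C(D, δ, α, β) ‖g‖_{L²(ℝ^n)}. -/

import Mathlib

open MeasureTheory Set
open scoped NNReal ENNReal

lemma aux_ball_lintegral (n : ℕ) {r : ℝ} (hr : r < n) :
    ∫⁻ x in Metric.ball (0 : EuclideanSpace ℝ (Fin n)) 1,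
      ENNReal.ofReal (‖x‖ ^ (-r)) < ∞ := by
  rcases le_or_gt r 0 with h0 | h0
  · calc ∫⁻ x in Metric.ball (0 : EuclideanSpace ℝ (Fin n)) 1, ENNReal.ofReal (‖x‖ ^ (-r))
        ≤ ∫⁻ _ in Metric.ball (0 : EuclideanSpace ℝ (Fin n)) 1, 1 := by
          refine setLIntegral_mono' measurableSet_ball fun x hx => ?_
          simp only [Metric.mem_ball, dist_zero_right] at hx
          exact ENNReal.ofReal_le_one.2 (Real.rpow_le_one (norm_nonneg _) hx.le (by linarith))
      _ = volume (Metric.ball (0 : EuclideanSpace ℝ (Fin n)) 1) := by simp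
      _ < ∞ := measure_ball_lt_top
  · set c : ℝ := 2⁻¹ with hc
    have hc0 : (0:ℝ) < c := by norm_num
    have hc1 : c < 1 := by norm_num
    set S : ℕ → Set (EuclideanSpace ℝ (Fin n)) :=
      fun k => Metric.closedBall 0 (c ^ k) \ Metric.ball 0 (c ^ (k+1)) with hS
    have hcover : Metric.ball (0 : EuclideanSpace ℝ (Fin n)) 1 ⊆ {0} ∪ ⋃ k, S k := by
      intro x hx
      rcases eq_or_ne x 0 with rfl | hx0
      · exact Or.inl rfl
      refine Or.inr ?_
      simp only [Metric.mem_ball, dist_zero_right] at hx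
      have hxpos : 0 < ‖x‖ := norm_pos_iff.2 hx0
      have hex : ∃ m : ℕ, c ^ (m+1) ≤ ‖x‖ := by
        obtain ⟨m, hm⟩ := exists_pow_lt_of_lt_one hxpos hc1
        exact ⟨m, le_of_lt (lt_of_le_of_lt
          (pow_le_pow_of_le_one hc0.le hc1.le (by omega)) hm)⟩
      set k := Nat.find hex with hk
      have hk1 : c ^ (k+1) ≤ ‖x‖ := Nat.find_spec hex
      have hk2 : ‖x‖ ≤ c ^ k := by
        rcases Nat.eq_zero_or_pos k with h | h
        · rw [h]; simpa using hx.le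
        · have hlt : k - 1 < k := by omega
          have h5 := Nat.find_min hex hlt
          push_neg at h5
          have h6 : k - 1 + 1 = k := by omega
          rw [h6] at h5
          exact h5.le
      refine mem_iUnion.2 ⟨k, ?_⟩
      simp only [hS, mem_diff, Metric.mem_closedBall, Metric.mem_ball, dist_zero_right,
        not_lt]
      exact ⟨hk2, hk1⟩
    set d : ℝ := c ^ (-r) with hd
    set q : ℝ := c ^ ((n:ℝ) - r) with hq
    have hd0 : 0 ≤ d := Real.rpow_nonneg hc0.le _
    have hq0 : 0 ≤ q := Real.rpow_nonneg hc0.le _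
    have hq1 : q < 1 := Real.rpow_lt_one hc0.le hc1 (by linarith)
    have hterm : ∀ k : ℕ, (c ^ (k+1)) ^ (-r) * (c ^ k) ^ n = d * q ^ k := by
      intro k
      have h1 : ((c:ℝ) ^ (k+1)) ^ (-r) = c ^ ((((k:ℝ)+1)) * (-r)) := by
        rw [← Real.rpow_natCast c (k+1), ← Real.rpow_mul hc0.le]
        push_cast; ring_nf
      have h2 : ((c:ℝ) ^ k) ^ n = c ^ ((k:ℝ) * n) := by
        rw [← Real.rpow_natCast c k, ← Real.rpow_natCast (c ^ (k:ℝ)) n,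
          ← Real.rpow_mul hc0.le]
      have h3 : d * q ^ k = c ^ ((-r) + ((n:ℝ) - r) * k) := by
        rw [hd, hq, ← Real.rpow_natCast (c ^ ((n:ℝ) - r)) k, ← Real.rpow_mul hc0.le,
          ← Real.rpow_add hc0]
      rw [h1, h2, h3, ← Real.rpow_add hc0]
      congr 1
      ring
    have hSmeas : ∀ k, MeasurableSet (S k) := fun k =>
      measurableSet_closedBall.diff measurableSet_ball
    have hshell : ∀ k : ℕ, (∫⁻ x in S k, ENNReal.ofReal (‖x‖ ^ (-r)))
        ≤ (ENNReal.ofReal d * ENNReal.ofReal q ^ k) *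
          volume (Metric.ball (0 : EuclideanSpace ℝ (Fin n)) 1) := by
      intro k
      have hle : ∀ x ∈ S k, ENNReal.ofReal (‖x‖ ^ (-r))
          ≤ ENNReal.ofReal ((c ^ (k+1)) ^ (-r)) := by
        intro x hx
        simp only [hS, mem_diff, Metric.mem_closedBall, Metric.mem_ball, dist_zero_right,
          not_lt] at hx
        exact ENNReal.ofReal_le_ofReal
          (Real.rpow_le_rpow_of_nonpos (pow_pos hc0 _) hx.2 (by linarith))
      calc (∫⁻ x in S k, ENNReal.ofReal (‖x‖ ^ (-r)))
          ≤ ∫⁻ _ in S k, ENNReal.ofReal ((c ^ (k+1)) ^ (-r)) :=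
            setLIntegral_mono' (hSmeas k) hle
        _ = ENNReal.ofReal ((c ^ (k+1)) ^ (-r)) * volume (S k) := setLIntegral_const _ _
        _ ≤ ENNReal.ofReal ((c ^ (k+1)) ^ (-r)) *
            (ENNReal.ofReal ((c ^ k) ^ n) *
              volume (Metric.ball (0 : EuclideanSpace ℝ (Fin n)) 1)) := by
            refine mul_le_mul_right ?_ _
            refine le_trans (measure_mono diff_subset) ?_
            rw [Measure.addHaar_closedBall _ _ (pow_nonneg hc0.le _)]
            simp [finrank_euclideanSpace_fin]
        _ = (ENNReal.ofReal d * ENNReal.ofReal q ^ k) *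
            volume (Metric.ball (0 : EuclideanSpace ℝ (Fin n)) 1) := by
            rw [← mul_assoc, ← ENNReal.ofReal_mul (Real.rpow_nonneg (pow_nonneg hc0.le _) _),
              hterm k, ENNReal.ofReal_mul hd0, ENNReal.ofReal_pow hq0]
    calc ∫⁻ x in Metric.ball (0 : EuclideanSpace ℝ (Fin n)) 1, ENNReal.ofReal (‖x‖ ^ (-r))
        ≤ ∫⁻ x in ({0} ∪ ⋃ k, S k :
            Set (EuclideanSpace ℝ (Fin n))), ENNReal.ofReal (‖x‖ ^ (-r)) :=
          lintegral_mono_set hcover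
      _ ≤ (∫⁻ x in ({0} : Set (EuclideanSpace ℝ (Fin n))), ENNReal.ofReal (‖x‖ ^ (-r)))
          + ∫⁻ x in (⋃ k, S k), ENNReal.ofReal (‖x‖ ^ (-r)) := lintegral_union_le _ _ _
      _ = ∫⁻ x in (⋃ k, S k), ENNReal.ofReal (‖x‖ ^ (-r)) := by
          rw [lintegral_singleton]
          simp [Real.zero_rpow (by linarith : -r ≠ 0)]
      _ ≤ ∑' k, ∫⁻ x in S k, ENNReal.ofReal (‖x‖ ^ (-r)) := lintegral_iUnion_le _ _
      _ ≤ ∑' k, (ENNReal.ofReal d * ENNReal.ofReal q ^ k) *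
            volume (Metric.ball (0 : EuclideanSpace ℝ (Fin n)) 1) :=
          ENNReal.tsum_le_tsum hshell
      _ < ∞ := by
          have : ∑' (k : ℕ), (ENNReal.ofReal d * ENNReal.ofReal q ^ k) *
              volume (Metric.ball (0 : EuclideanSpace ℝ (Fin n)) 1)
              = ENNReal.ofReal d * volume (Metric.ball (0 : EuclideanSpace ℝ (Fin n)) 1) *
                ∑' (k : ℕ), ENNReal.ofReal q ^ k := by
            rw [← ENNReal.tsum_mul_left]
            congr 1; ext k; ring
          rw [this, ENNReal.tsum_geometric]
          refine ENNReal.mul_lt_top (ENNReal.mul_lt_top ENNReal.ofReal_lt_top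
            measure_ball_lt_top) ?_
          rw [ENNReal.inv_lt_top]
          exact tsub_pos_of_lt (by exact_mod_cast ENNReal.ofReal_lt_one.2 hq1)

lemma aux_global (n : ℕ) (α s : ℝ) (h2 : 2*α < (n:ℝ)) (h3 : (n:ℝ) < 2*α + 2*s) :
    ∫⁻ z : EuclideanSpace ℝ (Fin n),
      ENNReal.ofReal (‖z‖ ^ (-(2*α)) * (1 + ‖z‖^2) ^ (-s)) < ∞ := by
  rw [← lintegral_add_compl (μ := volume)
    (fun z : EuclideanSpace ℝ (Fin n) => ENNReal.ofReal (‖z‖ ^ (-(2*α)) * (1 + ‖z‖^2) ^ (-s)))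
    (measurableSet_ball (x := (0 : EuclideanSpace ℝ (Fin n))) (ε := 1))]
  refine ENNReal.add_lt_top.2 ⟨?_, ?_⟩
  · -- ball part
    have hb : ∀ z : EuclideanSpace ℝ (Fin n), z ∈ Metric.ball (0 : EuclideanSpace ℝ (Fin n)) 1 →
        ENNReal.ofReal (‖z‖ ^ (-(2*α)) * (1 + ‖z‖^2) ^ (-s))
          ≤ ENNReal.ofReal ((2:ℝ) ^ |s|) * ENNReal.ofReal (‖z‖ ^ (-(2*α))) := by
      intro z hz
      simp only [Metric.mem_ball, dist_zero_right] at hz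
      have hbase1 : (1:ℝ) ≤ 1 + ‖z‖^2 := by nlinarith [norm_nonneg z]
      have hbase2 : (1:ℝ) + ‖z‖^2 ≤ 2 := by nlinarith [norm_nonneg z, hz]
      have hfac : (1 + ‖z‖^2) ^ (-s) ≤ (2:ℝ) ^ |s| := by
        calc (1 + ‖z‖^2) ^ (-s) ≤ (1 + ‖z‖^2) ^ |s| :=
              Real.rpow_le_rpow_of_exponent_le hbase1 (neg_le_abs s)
          _ ≤ (2:ℝ) ^ |s| := Real.rpow_le_rpow (by linarith) hbase2 (abs_nonneg s)
      rw [← ENNReal.ofReal_mul (by positivity)]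
      refine ENNReal.ofReal_le_ofReal ?_
      rw [mul_comm]
      exact mul_le_mul_of_nonneg_right hfac (Real.rpow_nonneg (norm_nonneg z) _)
    calc ∫⁻ z in Metric.ball (0 : EuclideanSpace ℝ (Fin n)) 1,
          ENNReal.ofReal (‖z‖ ^ (-(2*α)) * (1 + ‖z‖^2) ^ (-s))
        ≤ ∫⁻ z in Metric.ball (0 : EuclideanSpace ℝ (Fin n)) 1,
            ENNReal.ofReal ((2:ℝ) ^ |s|) * ENNReal.ofReal (‖z‖ ^ (-(2*α))) :=
          setLIntegral_mono' measurableSet_ball hb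
      _ = ENNReal.ofReal ((2:ℝ) ^ |s|) *
            ∫⁻ z in Metric.ball (0 : EuclideanSpace ℝ (Fin n)) 1,
              ENNReal.ofReal (‖z‖ ^ (-(2*α))) := lintegral_const_mul' _ _ ENNReal.ofReal_ne_top
      _ < ∞ := ENNReal.mul_lt_top ENNReal.ofReal_lt_top (aux_ball_lintegral n h2)
  · -- complement part
    have hb : ∀ z : EuclideanSpace ℝ (Fin n),
        z ∈ (Metric.ball (0 : EuclideanSpace ℝ (Fin n)) 1)ᶜ →
        ENNReal.ofReal (‖z‖ ^ (-(2*α)) * (1 + ‖z‖^2) ^ (-s))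
          ≤ ENNReal.ofReal ((2:ℝ) ^ |α|) * ENNReal.ofReal ((1 + ‖z‖^2) ^ (-(α+s))) := by
      intro z hz
      simp only [mem_compl_iff, Metric.mem_ball, dist_zero_right, not_lt] at hz
      have hzpos : (0:ℝ) < ‖z‖ := lt_of_lt_of_le one_pos hz
      have hbpos : (0:ℝ) < 1 + ‖z‖^2 := by positivity
      have hstep : ‖z‖ ^ (-(2*α)) ≤ (2:ℝ) ^ |α| * (1 + ‖z‖^2) ^ (-α) := by
        have hn2 : ‖z‖ ^ (-(2*α)) = (‖z‖^2) ^ (-α) := by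
          rw [← Real.rpow_natCast ‖z‖ 2, ← Real.rpow_mul (norm_nonneg z)]
          congr 1; push_cast; ring
        rw [hn2]
        rcases le_or_gt 0 α with hα | hα
        · have hhalf : (1 + ‖z‖^2)/2 ≤ ‖z‖^2 := by nlinarith
          have h4 : (‖z‖^2) ^ (-α) ≤ ((1 + ‖z‖^2)/2) ^ (-α) :=
            Real.rpow_le_rpow_of_nonpos (by positivity) hhalf (by linarith)
          have h5 : ((1 + ‖z‖^2)/2) ^ (-α) = (2:ℝ)^α * (1 + ‖z‖^2) ^ (-α) := by
            rw [Real.div_rpow hbpos.le (by norm_num), Real.rpow_neg (by norm_num : (0:ℝ) ≤ 2)]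
            field_simp
          have h6 : (2:ℝ)^α ≤ (2:ℝ)^|α| :=
            Real.rpow_le_rpow_of_exponent_le one_le_two (le_abs_self α)
          calc (‖z‖^2) ^ (-α) ≤ (2:ℝ)^α * (1 + ‖z‖^2) ^ (-α) := h5 ▸ h4
            _ ≤ (2:ℝ)^|α| * (1 + ‖z‖^2) ^ (-α) :=
              mul_le_mul_of_nonneg_right h6 (Real.rpow_nonneg hbpos.le _)
        · have h4 : (‖z‖^2) ^ (-α) ≤ (1 + ‖z‖^2) ^ (-α) :=
            Real.rpow_le_rpow (by positivity) (by nlinarith) (by linarith)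
          have h6 : (1:ℝ) ≤ (2:ℝ)^|α| := by
            calc (1:ℝ) = (2:ℝ)^(0:ℝ) := (Real.rpow_zero 2).symm
              _ ≤ (2:ℝ)^|α| := Real.rpow_le_rpow_of_exponent_le one_le_two (abs_nonneg α)
          nlinarith [Real.rpow_nonneg hbpos.le (-α), Real.rpow_nonneg (sq_nonneg ‖z‖) (-α)]
      have hsplit : (1 + ‖z‖^2) ^ (-(α+s)) = (1 + ‖z‖^2) ^ (-α) * (1 + ‖z‖^2) ^ (-s) := by
        rw [← Real.rpow_add hbpos]; congr 1; ring
      rw [← ENNReal.ofReal_mul (by positivity)]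
      refine ENNReal.ofReal_le_ofReal ?_
      calc ‖z‖ ^ (-(2*α)) * (1 + ‖z‖^2) ^ (-s)
          ≤ ((2:ℝ) ^ |α| * (1 + ‖z‖^2) ^ (-α)) * (1 + ‖z‖^2) ^ (-s) :=
            mul_le_mul_of_nonneg_right hstep (Real.rpow_nonneg hbpos.le _)
        _ = (2:ℝ) ^ |α| * (1 + ‖z‖^2) ^ (-(α+s)) := by rw [hsplit]; ring
    have hint : (∫⁻ z : EuclideanSpace ℝ (Fin n),
        ENNReal.ofReal ((1 + ‖z‖^2) ^ (-(α+s)))) < ∞ := by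
      have hnr : (Module.finrank ℝ (EuclideanSpace ℝ (Fin n)) : ℝ) < 2*(α+s) := by
        rw [finrank_euclideanSpace_fin]; linarith
      have hInt := integrable_rpow_neg_one_add_norm_sq
        (E := EuclideanSpace ℝ (Fin n)) (μ := volume) hnr
      have heq : -(2*(α+s))/2 = -(α+s) := by ring
      rw [heq] at hInt
      exact hInt.lintegral_lt_top
    calc ∫⁻ z in (Metric.ball (0 : EuclideanSpace ℝ (Fin n)) 1)ᶜ,
          ENNReal.ofReal (‖z‖ ^ (-(2*α)) * (1 + ‖z‖^2) ^ (-s))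
        ≤ ∫⁻ z in (Metric.ball (0 : EuclideanSpace ℝ (Fin n)) 1)ᶜ,
            ENNReal.ofReal ((2:ℝ) ^ |α|) * ENNReal.ofReal ((1 + ‖z‖^2) ^ (-(α+s))) :=
          setLIntegral_mono' measurableSet_ball.compl hb
      _ = ENNReal.ofReal ((2:ℝ) ^ |α|) *
            ∫⁻ z in (Metric.ball (0 : EuclideanSpace ℝ (Fin n)) 1)ᶜ,
              ENNReal.ofReal ((1 + ‖z‖^2) ^ (-(α+s))) :=
          lintegral_const_mul' _ _ ENNReal.ofReal_ne_top
      _ ≤ ENNReal.ofReal ((2:ℝ) ^ |α|) *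
            ∫⁻ z : EuclideanSpace ℝ (Fin n), ENNReal.ofReal ((1 + ‖z‖^2) ^ (-(α+s))) :=
          mul_le_mul_right (setLIntegral_le_lintegral _ _) _
      _ < ∞ := ENNReal.mul_lt_top ENNReal.ofReal_lt_top hint

theorem stmt11 (n : ℕ) (δ α β : ℝ) (hδ1 : 1/2 < δ) (hδ2 : δ < 1)
    (h1 : (n : ℝ) - 2*δ < 2*α + 2*β) (h2 : 2*α < (n : ℝ))
    (D : Set (EuclideanSpace ℝ (Fin n))) (hD : IsCompact D)
    (f : EuclideanSpace ℝ (Fin n) → ℂ) (hf : Measurable f)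
    (hfb : ∀ x, ‖f x‖ ≤ ‖x‖ ^ (-α) * (1 + ‖x‖^2) ^ (-β/2)) :
    ∃ C : ℝ≥0, ∀ g : EuclideanSpace ℝ (Fin n) → ℂ, Measurable g →
      (∀ x, x ∉ D → g x = 0) →
      ∫⁻ x, ENNReal.ofReal ((1 + ‖x‖^2) ^ (-δ) * ‖∫ y, f (x - y) * g y‖^2)
        ≤ (C : ENNReal) * ∫⁻ x, ENNReal.ofReal (‖g x‖^2) := by
  classical
  obtain ⟨R₀, hR₀⟩ := hD.isBounded.subset_closedBall 0
  set R : ℝ := max R₀ 0 with hRdef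
  have hR0 : 0 ≤ R := le_max_right _ _
  have hDR : D ⊆ Metric.closedBall 0 R :=
    hR₀.trans (Metric.closedBall_subset_closedBall (le_max_left _ _))
  have hDmeas : MeasurableSet D := hD.isClosed.measurableSet
  set K : ℝ := 2 + 2*R^2 with hKdef
  have hK1 : (1:ℝ) ≤ K := by nlinarith [sq_nonneg R]
  set Kd : ℝ := K ^ δ with hKd
  have hKd0 : 0 ≤ Kd := Real.rpow_nonneg (by linarith) δ
  set w : EuclideanSpace ℝ (Fin n) → ℝ≥0∞ :=
    fun x => ENNReal.ofReal ((1 + ‖x‖^2) ^ (-δ)) with hw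
  have hwmeas : Measurable w := by
    apply Measurable.ennreal_ofReal
    exact ((continuous_const.add ((continuous_norm).pow 2)).rpow_const
      (fun x => Or.inl (by positivity : (1:ℝ) + ‖x‖^2 ≠ 0))).measurable
  set F2 : EuclideanSpace ℝ (Fin n) → ℝ≥0∞ := fun z => (‖f z‖₊ : ℝ≥0∞) ^ 2 with hF2
  have hF2meas : Measurable F2 := (hf.enorm).pow_const 2
  set ind : EuclideanSpace ℝ (Fin n) → ℝ≥0∞ := D.indicator (fun _ => 1) with hind
  have hindmeas : Measurable ind := measurable_const.indicator hDmeas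
  set Φ : EuclideanSpace ℝ (Fin n) → ℝ≥0∞ := fun x => ∫⁻ y, F2 (x - y) * ind y with hΦ
  have hkermeas : Measurable fun p :
      (EuclideanSpace ℝ (Fin n)) × (EuclideanSpace ℝ (Fin n)) =>
      F2 (p.1 - p.2) * ind p.2 :=
    (hF2meas.comp (measurable_fst.sub measurable_snd)).mul (hindmeas.comp measurable_snd)
  have hΦmeas : Measurable Φ := Measurable.lintegral_prod_right' hkermeas
  set J0 : ℝ≥0∞ := ∫⁻ z : EuclideanSpace ℝ (Fin n),
    ENNReal.ofReal (‖z‖ ^ (-(2*α)) * (1 + ‖z‖^2) ^ (-(β+δ))) with hJ0def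
  have hJ0 : J0 < ∞ := aux_global n α (β+δ) h2 (by linarith)
  have hJle : (∫⁻ z, w z * F2 z) ≤ J0 := by
    refine lintegral_mono fun z => ?_
    have hfz : (‖f z‖₊ : ℝ≥0∞) ≤ ENNReal.ofReal (‖z‖ ^ (-α) * (1 + ‖z‖^2) ^ (-β/2)) := by
      rw [← enorm_eq_nnnorm, ← ofReal_norm]; exact ENNReal.ofReal_le_ofReal (hfb z)
    have hstep : w z * F2 z ≤ ENNReal.ofReal ((1 + ‖z‖^2) ^ (-δ)) *
        ENNReal.ofReal ((‖z‖ ^ (-α) * (1 + ‖z‖^2) ^ (-β/2))^2) := by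
      refine mul_le_mul_right ?_ _
      rw [ENNReal.ofReal_pow (by positivity)]
      exact pow_le_pow_left' hfz 2
    refine hstep.trans (le_of_eq ?_)
    rw [← ENNReal.ofReal_mul (by positivity)]
    congr 1
    have e1 : (‖z‖ ^ (-α))^2 = ‖z‖ ^ (-(2*α)) := by
      rw [← Real.rpow_natCast (‖z‖ ^ (-α)) 2, ← Real.rpow_mul (norm_nonneg z)]
      congr 1; push_cast; ring
    have e2 : (((1:ℝ) + ‖z‖^2) ^ (-β/2))^2 = (1 + ‖z‖^2) ^ (-β) := by
      rw [← Real.rpow_natCast (((1:ℝ) + ‖z‖^2) ^ (-β/2)) 2, ← Real.rpow_mul (by positivity)]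
      congr 1; push_cast; ring
    have e3 : ((1:ℝ) + ‖z‖^2) ^ (-δ) * (1 + ‖z‖^2) ^ (-β) = (1 + ‖z‖^2) ^ (-(β+δ)) := by
      rw [← Real.rpow_add (by positivity)]; congr 1; ring
    calc ((1:ℝ) + ‖z‖^2) ^ (-δ) * (‖z‖ ^ (-α) * (1 + ‖z‖^2) ^ (-β/2))^2
        = (1 + ‖z‖^2) ^ (-δ) * ((‖z‖^(-α))^2 * (((1:ℝ)+‖z‖^2)^(-β/2))^2) := by ring
      _ = ‖z‖ ^ (-(2*α)) * (1 + ‖z‖^2) ^ (-(β+δ)) := by rw [e1, e2, ← e3]; ring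
  have hwe : ∀ y ∈ D, ∀ z : EuclideanSpace ℝ (Fin n),
      w (z + y) ≤ ENNReal.ofReal Kd * w z := by
    intro y hy z
    have hyR : ‖y‖ ≤ R := by
      simpa [Metric.mem_closedBall, dist_zero_right] using hDR hy
    have hposz : (0:ℝ) < 1 + ‖z‖^2 := by positivity
    have hposzy : (0:ℝ) < 1 + ‖z+y‖^2 := by positivity
    have htri : ‖z‖ ≤ ‖z+y‖ + R := by
      have h7 : ‖z‖ ≤ ‖z+y‖ + ‖y‖ := by
        simpa [add_sub_cancel_right] using norm_sub_le (z+y) y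
      linarith
    have hcomp : ((1:ℝ) + ‖z‖^2) ≤ K * (1 + ‖z+y‖^2) := by
      have hz2 : ‖z‖^2 ≤ (‖z+y‖ + R)^2 := by
        have := norm_nonneg z
        nlinarith
      have hK2 : (‖z+y‖ + R)^2 ≤ 2*‖z+y‖^2 + 2*R^2 := by nlinarith [sq_nonneg (‖z+y‖ - R)]
      rw [hKdef]
      nlinarith [sq_nonneg (R * ‖z+y‖), norm_nonneg (z+y)]
    have hdiv : ((1:ℝ) + ‖z‖^2)/K ≤ 1 + ‖z+y‖^2 :=
      (div_le_iff₀ (by linarith)).2 (by linarith [hcomp])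
    have h4 : ((1:ℝ) + ‖z+y‖^2) ^ (-δ) ≤ (((1:ℝ) + ‖z‖^2)/K) ^ (-δ) :=
      Real.rpow_le_rpow_of_nonpos (by positivity) hdiv (by linarith)
    have h5 : (((1:ℝ) + ‖z‖^2)/K) ^ (-δ) = Kd * ((1:ℝ) + ‖z‖^2) ^ (-δ) := by
      rw [Real.div_rpow hposz.le (by linarith), Real.rpow_neg (by linarith : (0:ℝ) ≤ K), hKd]
      field_simp
    rw [hw]
    calc ENNReal.ofReal ((1 + ‖z+y‖^2) ^ (-δ))
        ≤ ENNReal.ofReal (Kd * ((1:ℝ) + ‖z‖^2) ^ (-δ)) :=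
          ENNReal.ofReal_le_ofReal (h4.trans_eq h5)
      _ = ENNReal.ofReal Kd * ENNReal.ofReal (((1:ℝ) + ‖z‖^2) ^ (-δ)) :=
          ENNReal.ofReal_mul hKd0
  set A : ℝ≥0∞ := ∫⁻ x, w x * Φ x with hA
  have hAbound : A ≤ ENNReal.ofReal Kd * J0 * volume D := by
    have hstep1 : A = ∫⁻ x, ∫⁻ y, w x * (F2 (x - y) * ind y) := by
      refine lintegral_congr fun x => ?_
      exact (lintegral_const_mul' _ _ ENNReal.ofReal_ne_top).symm
    have hK2 : Measurable fun p :
        (EuclideanSpace ℝ (Fin n)) × (EuclideanSpace ℝ (Fin n)) =>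
        w p.1 * (F2 (p.1 - p.2) * ind p.2) :=
      (hwmeas.comp measurable_fst).mul hkermeas
    have hswap : (∫⁻ x, ∫⁻ y, w x * (F2 (x - y) * ind y))
        = ∫⁻ y, ∫⁻ x, w x * (F2 (x - y) * ind y) :=
      lintegral_lintegral_swap hK2.aemeasurable
    have hinner : ∀ y, (∫⁻ x, w x * (F2 (x - y) * ind y))
        ≤ (ENNReal.ofReal Kd * J0) * ind y := by
      intro y
      by_cases hy : y ∈ D
      · have hind1 : ind y = 1 := by simp [hind, hy]
        simp only [hind1, mul_one]
        have htrans : (∫⁻ x, w x * F2 (x - y)) = ∫⁻ z, w (z + y) * F2 z := by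
          have h8 := lintegral_add_right_eq_self (μ := volume)
            (fun x => w x * F2 (x - y)) y
          calc (∫⁻ x, w x * F2 (x - y)) = ∫⁻ z, w (z + y) * F2 (z + y - y) := h8.symm
            _ = ∫⁻ z, w (z + y) * F2 z := by simp [add_sub_cancel_right]
        rw [htrans]
        calc (∫⁻ z, w (z + y) * F2 z)
            ≤ ∫⁻ z, (ENNReal.ofReal Kd * w z) * F2 z :=
              lintegral_mono fun z => mul_le_mul_left (hwe y hy z) _
          _ = ∫⁻ z, ENNReal.ofReal Kd * (w z * F2 z) := by
              refine lintegral_congr fun z => ?_; ring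
          _ = ENNReal.ofReal Kd * ∫⁻ z, w z * F2 z :=
              lintegral_const_mul' _ _ ENNReal.ofReal_ne_top
          _ ≤ ENNReal.ofReal Kd * J0 := mul_le_mul_right hJle _
      · have hind0 : ind y = 0 := by simp [hind, hy]
        simp [hind0]
    calc A = ∫⁻ x, ∫⁻ y, w x * (F2 (x - y) * ind y) := hstep1
      _ = ∫⁻ y, ∫⁻ x, w x * (F2 (x - y) * ind y) := hswap
      _ ≤ ∫⁻ y, (ENNReal.ofReal Kd * J0) * ind y := lintegral_mono hinner
      _ = (ENNReal.ofReal Kd * J0) * ∫⁻ y, ind y :=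
          lintegral_const_mul' _ _ (ENNReal.mul_ne_top ENNReal.ofReal_ne_top hJ0.ne)
      _ = ENNReal.ofReal Kd * J0 * volume D := by
          rw [hind]
          congr 1
          rw [lintegral_indicator hDmeas]
          simp
  have hAfin : A ≠ ∞ := by
    refine (hAbound.trans_lt ?_).ne
    exact ENNReal.mul_lt_top (ENNReal.mul_lt_top ENNReal.ofReal_lt_top hJ0)
      hD.measure_lt_top
  refine ⟨A.toNNReal, ?_⟩
  intro g hg hgD
  set GG : ℝ≥0∞ := ∫⁻ y, (‖g y‖₊ : ℝ≥0∞) ^ 2 with hGGdef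
  have hRHS : (∫⁻ x, ENNReal.ofReal (‖g x‖^2)) = GG := by
    refine lintegral_congr fun x => ?_
    rw [ENNReal.ofReal_pow (norm_nonneg _), ofReal_norm, enorm_eq_nnnorm]
  have hpow2 : ∀ a : ℝ≥0∞, a ^ (2:ℝ) = a ^ (2:ℕ) := fun a => by
    rw [← ENNReal.rpow_natCast a 2]; norm_num
  have hsq : ∀ X : ℝ≥0∞, (X ^ ((1:ℝ)/2)) ^ (2:ℕ) = X := fun X => by
    rw [← ENNReal.rpow_natCast (X ^ ((1:ℝ)/2)) 2, ← ENNReal.rpow_mul]; norm_num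
  have hpoint : ∀ x, ENNReal.ofReal ((1 + ‖x‖^2) ^ (-δ) * ‖∫ y, f (x - y) * g y‖^2)
      ≤ (w x * Φ x) * GG := by
    intro x
    set u : EuclideanSpace ℝ (Fin n) → ℝ≥0∞ :=
      fun y => (‖f (x - y)‖₊ : ℝ≥0∞) * ind y with hu
    set v : EuclideanSpace ℝ (Fin n) → ℝ≥0∞ := fun y => (‖g y‖₊ : ℝ≥0∞) with hv
    have humeas : AEMeasurable u volume :=
      (((hf.comp (measurable_const.sub measurable_id)).enorm).mul hindmeas).aemeasurable
    have hvmeas : AEMeasurable v volume := hg.enorm.aemeasurable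
    have hconj : Real.HolderConjugate 2 2 := Real.HolderConjugate.two_two
    have hHolder := ENNReal.lintegral_mul_le_Lp_mul_Lq volume hconj humeas hvmeas
    simp only [Pi.mul_apply] at hHolder
    have hu2 : (∫⁻ y, u y ^ (2:ℝ)) = Φ x := by
      refine lintegral_congr fun y => ?_
      by_cases hy : y ∈ D
      · have hind1 : ind y = 1 := by simp [hind, hy]
        simp [hu, hind1, hpow2, hF2]
      · have hind0 : ind y = 0 := by simp [hind, hy]
        simp only [hu, hind0, mul_zero]
        exact ENNReal.zero_rpow_of_pos (by norm_num)
    have hv2 : (∫⁻ y, v y ^ (2:ℝ)) = GG := by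
      refine lintegral_congr fun y => ?_
      rw [hpow2]
    rw [hu2, hv2] at hHolder
    have hprod : ∀ y, ((‖f (x - y) * g y‖₊ : ℝ≥0∞)) = u y * v y := by
      intro y
      by_cases hy : y ∈ D
      · have hind1 : ind y = 1 := by simp [hind, hy]
        simp [hu, hv, hind1, nnnorm_mul, ENNReal.coe_mul]
      · have hind0 : ind y = 0 := by simp [hind, hy]
        simp [hu, hv, hind0, hgD y hy]
    calc ENNReal.ofReal ((1 + ‖x‖^2) ^ (-δ) * ‖∫ y, f (x - y) * g y‖^2)
        = w x * ((‖∫ y, f (x - y) * g y‖₊ : ℝ≥0∞)) ^ 2 := by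
          rw [ENNReal.ofReal_mul (Real.rpow_nonneg (by positivity) _),
            ENNReal.ofReal_pow (norm_nonneg _), ofReal_norm, enorm_eq_nnnorm, hw]
      _ ≤ w x * (∫⁻ y, u y * v y) ^ 2 := by
          refine mul_le_mul_right (pow_le_pow_left' ?_ 2) _
          refine le_trans (enorm_integral_le_lintegral_enorm _) (le_of_eq ?_)
          exact lintegral_congr hprod
      _ ≤ w x * ((Φ x) ^ ((1:ℝ)/2) * GG ^ ((1:ℝ)/2)) ^ 2 :=
          mul_le_mul_right (pow_le_pow_left' hHolder 2) _
      _ = (w x * Φ x) * GG := by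
          rw [mul_pow, hsq (Φ x), hsq GG, mul_assoc]
  calc ∫⁻ x, ENNReal.ofReal ((1 + ‖x‖^2) ^ (-δ) * ‖∫ y, f (x - y) * g y‖^2)
      ≤ ∫⁻ x, (w x * Φ x) * GG := lintegral_mono hpoint
    _ = A * GG := lintegral_mul_const _ (hwmeas.mul hΦmeas)
    _ = (A.toNNReal : ℝ≥0∞) * ∫⁻ x, ENNReal.ofReal (‖g x‖^2) := by
        rw [ENNReal.coe_toNNReal hAfin, hRHS]
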